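/- Let ρ, ρ' : Γ → Upp be representations of a group Γ into the group Upp of invertible upper-triangular 2×2 complex matrices, and assume both ρ and ρ' are not semisimple (i.e., the line spanned by e₁ is the unique line invariant under the image). Write ρ = ρ_{ℂ*} ⊗ ρ_Aff where ρ_{ℂ*}(α) is the (2,2) entry of ρ(α) and ρ_Aff = ρ_{ℂ*}⁻¹ ⊗ ρ, and similarly for ρ'. Then ρ and ρ' are conjugate in GL₂(ℂ) if and only if ρ_{ℂ*} = ρ'_{ℂ*} and ρ_Aff, ρ'_Aff are conjugate in Aff(ℂ). -/
import Mathlib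

open Matrix

private lemma entry11_ne_zero (A : GL (Fin 2) ℂ)
    (h : (A : Matrix (Fin 2) (Fin 2) ℂ) 1 0 = 0) :
    (A : Matrix (Fin 2) (Fin 2) ℂ) 1 1 ≠ 0 := by
  have hdet : IsUnit (A : Matrix (Fin 2) (Fin 2) ℂ).det :=
    (Matrix.isUnit_iff_isUnit_det _).mp A.isUnit
  rw [Matrix.det_fin_two, h, mul_zero, sub_zero] at hdet
  intro h1
  rw [h1, mul_zero] at hdet
  exact not_isUnit_zero hdet

/-- Two non-semisimple upper-triangular rank 2 representations are conjugate in `GL₂(ℂ)`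
iff their scalar parts are equal and their affine parts are conjugate in `Aff(ℂ)`. -/
theorem stmt5 {Γ : Type} [Group Γ] (ρ ρ' : Γ →* GL (Fin 2) ℂ)
    (hupp : ∀ γ, (ρ γ : Matrix (Fin 2) (Fin 2) ℂ) 1 0 = 0)
    (hupp' : ∀ γ, (ρ' γ : Matrix (Fin 2) (Fin 2) ℂ) 1 0 = 0)
    (hnss : ∀ V : Submodule ℂ (Fin 2 → ℂ),
      (∀ γ, ∀ v ∈ V, (ρ γ : Matrix (Fin 2) (Fin 2) ℂ).mulVec v ∈ V) →
      Module.finrank ℂ V = 1 → V = Submodule.span ℂ {Pi.single (0 : Fin 2) (1 : ℂ)})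
    (hnss' : ∀ V : Submodule ℂ (Fin 2 → ℂ),
      (∀ γ, ∀ v ∈ V, (ρ' γ : Matrix (Fin 2) (Fin 2) ℂ).mulVec v ∈ V) →
      Module.finrank ℂ V = 1 → V = Submodule.span ℂ {Pi.single (0 : Fin 2) (1 : ℂ)}) :
    (∃ M : GL (Fin 2) ℂ, ∀ γ, M * ρ γ * M⁻¹ = ρ' γ) ↔
      ((∀ γ, (ρ γ : Matrix (Fin 2) (Fin 2) ℂ) 1 1 = (ρ' γ : Matrix (Fin 2) (Fin 2) ℂ) 1 1) ∧
        ∃ P : Matrix (Fin 2) (Fin 2) ℂ, P 1 0 = 0 ∧ P 1 1 = 1 ∧ IsUnit P ∧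
          ∀ γ, P * (((ρ γ : Matrix (Fin 2) (Fin 2) ℂ) 1 1)⁻¹ • (ρ γ : Matrix (Fin 2) (Fin 2) ℂ))
            = (((ρ' γ : Matrix (Fin 2) (Fin 2) ℂ) 1 1)⁻¹
                • (ρ' γ : Matrix (Fin 2) (Fin 2) ℂ)) * P) := by
  constructor
  · rintro ⟨M, hM⟩
    -- matrix-level intertwining
    have hM' : ∀ γ, (M : Matrix (Fin 2) (Fin 2) ℂ) * (ρ γ : Matrix (Fin 2) (Fin 2) ℂ)
        = (ρ' γ : Matrix (Fin 2) (Fin 2) ℂ) * (M : Matrix (Fin 2) (Fin 2) ℂ) := by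
      intro γ
      have h2 : M * ρ γ = ρ' γ * M := by
        rw [← hM γ]; group
      exact congrArg Units.val h2
    set e1 : Fin 2 → ℂ := Pi.single (0 : Fin 2) (1 : ℂ) with he1
    have hcol : ∀ (A : Matrix (Fin 2) (Fin 2) ℂ) i, A.mulVec e1 i = A i 0 := by
      intro A i
      simp [he1, Matrix.mulVec, dotProduct, Fin.sum_univ_two, Pi.single_apply]
    have hρe1 : ∀ γ, (ρ γ : Matrix (Fin 2) (Fin 2) ℂ).mulVec e1
        = ((ρ γ : Matrix (Fin 2) (Fin 2) ℂ) 0 0) • e1 := by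
      intro γ
      funext i
      fin_cases i <;>
        simp [hcol, he1, Pi.single_apply, hupp γ]
    have hMe1ne : (M : Matrix (Fin 2) (Fin 2) ℂ).mulVec e1 ≠ 0 := by
      intro h0
      have : ((M⁻¹ : GL (Fin 2) ℂ) : Matrix (Fin 2) (Fin 2) ℂ).mulVec
          ((M : Matrix (Fin 2) (Fin 2) ℂ).mulVec e1) = e1 := by
        rw [Matrix.mulVec_mulVec]
        have : ((M⁻¹ : GL (Fin 2) ℂ) : Matrix (Fin 2) (Fin 2) ℂ)
            * (M : Matrix (Fin 2) (Fin 2) ℂ) = 1 := by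
          exact M.inv_mul
        rw [this, Matrix.one_mulVec]
      rw [h0, Matrix.mulVec_zero] at this
      have h1 := congrFun this 0
      rw [he1] at h1
      simp at h1
    set V : Submodule ℂ (Fin 2 → ℂ) :=
      Submodule.span ℂ {(M : Matrix (Fin 2) (Fin 2) ℂ).mulVec e1} with hV
    have hVinv : ∀ γ, ∀ v ∈ V, (ρ' γ : Matrix (Fin 2) (Fin 2) ℂ).mulVec v ∈ V := by
      intro γ v hv
      rw [hV, Submodule.mem_span_singleton] at hv
      obtain ⟨c, rfl⟩ := hv
      rw [Matrix.mulVec_smul, Matrix.mulVec_mulVec, ← hM' γ, ← Matrix.mulVec_mulVec,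
        hρe1 γ, Matrix.mulVec_smul]
      rw [hV, Submodule.mem_span_singleton]
      exact ⟨c * ((ρ γ : Matrix (Fin 2) (Fin 2) ℂ) 0 0), by rw [mul_smul]⟩
    have hVfr : Module.finrank ℂ V = 1 := finrank_span_singleton hMe1ne
    have hVeq := hnss' V hVinv hVfr
    have hmem : (M : Matrix (Fin 2) (Fin 2) ℂ).mulVec e1 ∈ V :=
      Submodule.mem_span_singleton_self _
    rw [hVeq, Submodule.mem_span_singleton] at hmem
    obtain ⟨c, hc⟩ := hmem
    have hM10 : (M : Matrix (Fin 2) (Fin 2) ℂ) 1 0 = 0 := by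
      have h1 := congrFun hc 1
      rw [hcol] at h1
      simpa [he1] using h1.symm
    have hM11 : (M : Matrix (Fin 2) (Fin 2) ℂ) 1 1 ≠ 0 := entry11_ne_zero M hM10
    have h11 : ∀ γ, (ρ γ : Matrix (Fin 2) (Fin 2) ℂ) 1 1
        = (ρ' γ : Matrix (Fin 2) (Fin 2) ℂ) 1 1 := by
      intro γ
      have h := congrFun (congrFun (hM' γ) 1) 1
      rw [Matrix.mul_apply, Matrix.mul_apply, Fin.sum_univ_two, Fin.sum_univ_two,
        hM10, hupp' γ] at h
      simp only [zero_mul, zero_add, mul_zero, add_zero] at h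
      exact mul_left_cancel₀ hM11 (h.trans (mul_comm _ _))
    refine ⟨h11, ((M : Matrix (Fin 2) (Fin 2) ℂ) 1 1)⁻¹ • (M : Matrix (Fin 2) (Fin 2) ℂ),
        ?_, ?_, ?_, ?_⟩
    · rw [Matrix.smul_apply, hM10, smul_eq_mul, mul_zero]
    · rw [Matrix.smul_apply, smul_eq_mul, inv_mul_cancel₀ hM11]
    · have hdet : (M : Matrix (Fin 2) (Fin 2) ℂ).det ≠ 0 :=
        ((Matrix.isUnit_iff_isUnit_det _).mp M.isUnit).ne_zero
      rw [Matrix.isUnit_iff_isUnit_det, Matrix.det_smul]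
      simp [isUnit_iff_ne_zero, pow_ne_zero, inv_ne_zero hM11, hdet, hM11]
    · intro γ
      rw [smul_mul_assoc, mul_smul_comm, mul_smul_comm, smul_mul_assoc, smul_smul, smul_smul,
        hM' γ, h11 γ, mul_comm]
  · rintro ⟨h11, P, hP10, hP11, hPu, hcomm⟩
    have key : ∀ γ, P * (ρ γ : Matrix (Fin 2) (Fin 2) ℂ)
        = (ρ' γ : Matrix (Fin 2) (Fin 2) ℂ) * P := by
      intro γ
      have hA11 : (ρ γ : Matrix (Fin 2) (Fin 2) ℂ) 1 1 ≠ 0 := entry11_ne_zero _ (hupp γ)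
      have h := hcomm γ
      rw [mul_smul_comm, smul_mul_assoc, ← h11 γ] at h
      exact smul_right_injective (Matrix (Fin 2) (Fin 2) ℂ) (inv_ne_zero hA11) h
    refine ⟨⟨P, ↑hPu.unit⁻¹, ?_, ?_⟩, ?_⟩
    · have := hPu.unit.mul_inv
      rwa [hPu.unit_spec] at this
    · have := hPu.unit.inv_mul
      rwa [hPu.unit_spec] at this
    · intro γ
      rw [mul_inv_eq_iff_eq_mul]
      apply Units.ext
      simpa using key γ
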